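/- Let A ∈ ℝ^{n×n} with comparison matrix M(A) (defined by M(A)_{ii} = -max(-a_{ii},0), M(A)_{ij} = |a_{ij}| for i≠j). If M(A) is Hurwitz, then there exists a diagonal matrix P with positive diagonal entries such that P·A + Aᵀ·P is negative definite. -/

import Mathlib

open Matrix

/-- `A` is Hurwitz: every complex eigenvalue has negative real part. -/
def IsHurwitz {n : Type*} [Fintype n] [DecidableEq n] (A : Matrix n n ℝ) : Prop :=
  ∀ μ ∈ spectrum ℂ (A.map (algebraMap ℝ ℂ)), μ.re < 0

/-- The comparison matrix of `A`. -/
def compMat {n : ℕ} (A : Matrix (Fin n) (Fin n) ℝ) : Matrix (Fin n) (Fin n) ℝ :=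
  Matrix.of fun i j => if i = j then -max (-(A i i)) 0 else |A i j|

namespace CHaux

open Finset

variable {n : ℕ}

/-- Sum of absolute values of entries, a submultiplicative "norm". -/
def mnorm (X : Matrix (Fin n) (Fin n) ℝ) : ℝ := ∑ i, ∑ j, |X i j|

lemma mnorm_nonneg (X : Matrix (Fin n) (Fin n) ℝ) : 0 ≤ mnorm X :=
  Finset.sum_nonneg fun i _ => Finset.sum_nonneg fun j _ => abs_nonneg _

lemma rowsum_le_mnorm (X : Matrix (Fin n) (Fin n) ℝ) (i : Fin n) :
    ∑ j, |X i j| ≤ mnorm X :=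
  Finset.single_le_sum (f := fun i => ∑ j, |X i j|)
    (fun i _ => Finset.sum_nonneg fun j _ => abs_nonneg _) (mem_univ i)

lemma colsum_le_mnorm (X : Matrix (Fin n) (Fin n) ℝ) (j : Fin n) :
    ∑ i, |X i j| ≤ mnorm X := by
  have : ∑ i, |X i j| ≤ ∑ i, ∑ k, |X i k| :=
    Finset.sum_le_sum fun i _ =>
      Finset.single_le_sum (f := fun k => |X i k|) (fun k _ => abs_nonneg _) (mem_univ j)
  exact this

lemma abs_le_mnorm (X : Matrix (Fin n) (Fin n) ℝ) (i j : Fin n) : |X i j| ≤ mnorm X :=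
  le_trans (Finset.single_le_sum (f := fun k => |X i k|) (fun k _ => abs_nonneg _) (mem_univ j))
    (rowsum_le_mnorm X i)

lemma mnorm_smul (a : ℝ) (X : Matrix (Fin n) (Fin n) ℝ) : mnorm (a • X) = |a| * mnorm X := by
  simp [mnorm, abs_mul, Finset.mul_sum]

lemma mnorm_mul_le (X Y : Matrix (Fin n) (Fin n) ℝ) : mnorm (X * Y) ≤ mnorm X * mnorm Y := by
  have h1 : mnorm (X * Y) ≤ ∑ i, ∑ j, ∑ k, |X i k| * |Y k j| := by
    refine Finset.sum_le_sum fun i _ => Finset.sum_le_sum fun j _ => ?_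
    calc |(X * Y) i j| = |∑ k, X i k * Y k j| := by rw [Matrix.mul_apply]
      _ ≤ ∑ k, |X i k * Y k j| := Finset.abs_sum_le_sum_abs _ _
      _ = ∑ k, |X i k| * |Y k j| := by simp [abs_mul]
  have h2 : ∑ i, ∑ j, ∑ k, |X i k| * |Y k j| = ∑ k, (∑ i, |X i k|) * (∑ j, |Y k j|) := by
    have hin : ∀ i : Fin n, ∑ j, ∑ k, |X i k| * |Y k j| = ∑ k, |X i k| * ∑ j, |Y k j| := by
      intro i
      rw [Finset.sum_comm]
      exact Finset.sum_congr rfl fun k _ => by rw [← Finset.mul_sum]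
    simp_rw [hin]
    rw [Finset.sum_comm]
    exact Finset.sum_congr rfl fun k _ => by rw [Finset.sum_mul]
  calc mnorm (X * Y) ≤ ∑ i, ∑ j, ∑ k, |X i k| * |Y k j| := h1
    _ = ∑ k, (∑ i, |X i k|) * (∑ j, |Y k j|) := h2
    _ ≤ ∑ k, mnorm X * (∑ j, |Y k j|) :=
        Finset.sum_le_sum fun k _ => mul_le_mul_of_nonneg_right (colsum_le_mnorm X k)
          (Finset.sum_nonneg fun _ _ => abs_nonneg _)
    _ = mnorm X * mnorm Y := by rw [← Finset.mul_sum]; rfl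

/-- Entry bound for products against powers. -/
lemma entry_pow_mul_le (Y X : Matrix (Fin n) (Fin n) ℝ) (K : ℕ) (i j : Fin n) :
    |(Y ^ K * X) i j| ≤ mnorm Y ^ K * mnorm X := by
  induction K generalizing i j with
  | zero => simpa using abs_le_mnorm X i j
  | succ K ih =>
    have h : (Y ^ (K + 1) * X) i j = ∑ k, Y i k * (Y ^ K * X) k j := by
      rw [pow_succ', mul_assoc, Matrix.mul_apply]
    calc |(Y ^ (K + 1) * X) i j| ≤ ∑ k, |Y i k| * |(Y ^ K * X) k j| := by
          rw [h]; exact le_trans (Finset.abs_sum_le_sum_abs _ _) (by simp [abs_mul])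
      _ ≤ ∑ k, |Y i k| * (mnorm Y ^ K * mnorm X) :=
          Finset.sum_le_sum fun k _ => mul_le_mul_of_nonneg_left (ih k j) (abs_nonneg _)
      _ = (∑ k, |Y i k|) * (mnorm Y ^ K * mnorm X) := by rw [Finset.sum_mul]
      _ ≤ mnorm Y * (mnorm Y ^ K * mnorm X) := by
          exact mul_le_mul_of_nonneg_right (rowsum_le_mnorm Y i)
            (mul_nonneg (pow_nonneg (mnorm_nonneg Y) K) (mnorm_nonneg X))
      _ = mnorm Y ^ (K + 1) * mnorm X := by ring

lemma mul_entries_nonneg {X Y : Matrix (Fin n) (Fin n) ℝ}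
    (hX : ∀ i j, 0 ≤ X i j) (hY : ∀ i j, 0 ≤ Y i j) : ∀ i j, 0 ≤ (X * Y) i j := fun i j => by
  rw [Matrix.mul_apply]
  exact Finset.sum_nonneg fun k _ => mul_nonneg (hX i k) (hY k j)

lemma pow_entries_nonneg {Y : Matrix (Fin n) (Fin n) ℝ}
    (hY : ∀ i j, 0 ≤ Y i j) : ∀ K : ℕ, ∀ i j, 0 ≤ (Y ^ K) i j := by
  intro K
  induction K with
  | zero => intro i j; simp [Matrix.one_apply]; positivity
  | succ K ih => rw [pow_succ]; exact mul_entries_nonneg ih hY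

/-- Core fixpoint lemma: if `X = Z + Y * X` with `Z, Y` entrywise nonnegative
and `mnorm Y < 1`, then `X` is entrywise nonnegative. -/
lemma nonneg_of_fixpoint {X Z Y : Matrix (Fin n) (Fin n) ℝ}
    (hZ : ∀ i j, 0 ≤ Z i j) (hY : ∀ i j, 0 ≤ Y i j) (hY1 : mnorm Y < 1)
    (hfix : X = Z + Y * X) : ∀ i j, 0 ≤ X i j := by
  have key : ∀ K : ℕ, ∃ W : Matrix (Fin n) (Fin n) ℝ,
      (∀ i j, 0 ≤ W i j) ∧ X = W + Y ^ K * X := by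
    intro K
    induction K with
    | zero => exact ⟨0, fun i j => le_refl 0, by simp⟩
    | succ K ih =>
      obtain ⟨W, hW, hXW⟩ := ih
      refine ⟨W + Y ^ K * Z, fun i j => by
        simpa [Matrix.add_apply] using
          add_nonneg (hW i j) (mul_entries_nonneg (pow_entries_nonneg hY K) hZ i j), ?_⟩
      calc X = W + Y ^ K * X := hXW
        _ = W + Y ^ K * (Z + Y * X) := by conv_lhs => rw [hfix]
        _ = W + Y ^ K * Z + Y ^ (K + 1) * X := by
            rw [Matrix.mul_add, pow_succ, mul_assoc]; abel
  have hlb : ∀ K : ℕ, ∀ i j, -(mnorm Y ^ K * mnorm X) ≤ X i j := by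
    intro K i j
    obtain ⟨W, hW, hXW⟩ := key K
    have h1 : X i j = W i j + (Y ^ K * X) i j := by
      conv_lhs => rw [hXW]
      rw [Matrix.add_apply]
    have h2 : -(mnorm Y ^ K * mnorm X) ≤ (Y ^ K * X) i j :=
      (abs_le.mp (entry_pow_mul_le Y X K i j)).1
    linarith [hW i j]
  intro i j
  by_contra hneg
  push_neg at hneg
  rcases le_or_gt (mnorm X) 0 with hX0 | hX0
  · have h00 := hlb 0 i j
    simp at h00
    linarith
  · obtain ⟨K, hK⟩ := exists_pow_lt_of_lt_one (div_pos (neg_pos.mpr hneg) hX0) hY1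
    have h1 := hlb K i j
    have h2 : mnorm Y ^ K * mnorm X < -X i j := (lt_div_iff₀ hX0).mp hK
    linarith
/-! ### Resolvent of a Metzler Hurwitz matrix -/

variable {M : Matrix (Fin n) (Fin n) ℝ}

lemma isUnit_det_res (h : IsHurwitz M) {s : ℝ} (hs : 0 ≤ s) :
    IsUnit (s • (1 : Matrix (Fin n) (Fin n) ℝ) - M).det := by
  rw [isUnit_iff_ne_zero]
  intro hdet
  have hmap : ((s : ℂ) • (1 : Matrix (Fin n) (Fin n) ℂ) - M.map (algebraMap ℝ ℂ))
      = (s • (1 : Matrix (Fin n) (Fin n) ℝ) - M).map (algebraMap ℝ ℂ) := by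
    ext i j
    simp [Matrix.one_apply, apply_ite, Matrix.map_apply, Matrix.sub_apply, Matrix.smul_apply]
  have hspec : (s : ℂ) ∈ spectrum ℂ (M.map (algebraMap ℝ ℂ)) := by
    rw [spectrum.mem_iff]
    rw [Algebra.algebraMap_eq_smul_one, Matrix.isUnit_iff_isUnit_det]
    rw [hmap]
    have hdc : ((s • (1 : Matrix (Fin n) (Fin n) ℝ) - M).map (algebraMap ℝ ℂ)).det
        = algebraMap ℝ ℂ ((s • (1 : Matrix (Fin n) (Fin n) ℝ) - M).det) :=
      ((algebraMap ℝ ℂ).map_det _).symm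
    rw [hdc, hdet]
    simp
  have := h _ hspec
  simp at this
  linarith

lemma res_mul (h : IsHurwitz M) {s : ℝ} (hs : 0 ≤ s) :
    (s • (1 : Matrix (Fin n) (Fin n) ℝ) - M) * (s • (1 : Matrix (Fin n) (Fin n) ℝ) - M)⁻¹ = 1 :=
  Matrix.mul_nonsing_inv _ (isUnit_det_res h hs)

lemma mul_res (h : IsHurwitz M) {s : ℝ} (hs : 0 ≤ s) :
    (s • (1 : Matrix (Fin n) (Fin n) ℝ) - M)⁻¹ * (s • (1 : Matrix (Fin n) (Fin n) ℝ) - M) = 1 :=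
  Matrix.nonsing_inv_mul _ (isUnit_det_res h hs)

lemma resolvent_id (h : IsHurwitz M) {s t : ℝ} (hs : 0 ≤ s) (ht : 0 ≤ t) :
    (s • (1 : Matrix (Fin n) (Fin n) ℝ) - M)⁻¹
      = (t • (1 : Matrix (Fin n) (Fin n) ℝ) - M)⁻¹
        + ((t - s) • (t • (1 : Matrix (Fin n) (Fin n) ℝ) - M)⁻¹)
          * (s • (1 : Matrix (Fin n) (Fin n) ℝ) - M)⁻¹ := by
  set As := s • (1 : Matrix (Fin n) (Fin n) ℝ) - M with hAs
  set At := t • (1 : Matrix (Fin n) (Fin n) ℝ) - M with hAt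
  have hdiff : At - As = (t - s) • (1 : Matrix (Fin n) (Fin n) ℝ) := by
    rw [hAs, hAt, sub_sub_sub_cancel_right, ← sub_smul]
  have key : At⁻¹ * (At - As) * As⁻¹ = As⁻¹ - At⁻¹ := by
    rw [Matrix.mul_sub, Matrix.sub_mul, mul_res h ht, Matrix.one_mul,
      mul_assoc, res_mul h hs, Matrix.mul_one]
  have key2 : At⁻¹ * (At - As) * As⁻¹ = ((t - s) • At⁻¹) * As⁻¹ := by
    rw [hdiff, Matrix.mul_smul, Matrix.mul_one, Matrix.smul_mul]
  rw [← key2, key]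
  abel

lemma base_nonneg (hm : ∀ i j, i ≠ j → 0 ≤ M i j) (h : IsHurwitz M) :
    ∃ s₀ : ℝ, 0 ≤ s₀ ∧ ∀ i j, 0 ≤ (s₀ • (1 : Matrix (Fin n) (Fin n) ℝ) - M)⁻¹ i j := by
  set α := mnorm M with hα
  set B := M + α • (1 : Matrix (Fin n) (Fin n) ℝ) with hB
  have hBnn : ∀ i j, 0 ≤ B i j := by
    intro i j
    rcases eq_or_ne i j with rfl | hij
    · have h1 : |M i i| ≤ α := abs_le_mnorm M i i
      have : B i i = M i i + α := by simp [hB, Matrix.one_apply]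
      rw [this]
      cases abs_le.mp h1; linarith
    · have : B i j = M i j := by simp [hB, Matrix.one_apply, hij]
      rw [this]; exact hm i j hij
  set s₀ := mnorm B + 1 with hs₀
  have hαnn : 0 ≤ α := mnorm_nonneg M
  have hs₀pos : 0 < s₀ := by have := mnorm_nonneg B; simp [hs₀]; linarith
  refine ⟨s₀, le_of_lt hs₀pos, ?_⟩
  set g := (s₀ • (1 : Matrix (Fin n) (Fin n) ℝ) - M)⁻¹ with hg
  have hsum : 0 < s₀ + α := by linarith
  have hEq : s₀ • (1 : Matrix (Fin n) (Fin n) ℝ) - M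
      = (s₀ + α) • (1 : Matrix (Fin n) (Fin n) ℝ) - B := by
    rw [hB]; module
  have hmul : ((s₀ + α) • (1 : Matrix (Fin n) (Fin n) ℝ) - B) * g = 1 := by
    rw [← hEq]; exact res_mul h (le_of_lt hs₀pos)
  have hfix : g = (s₀ + α)⁻¹ • (1 : Matrix (Fin n) (Fin n) ℝ)
      + ((s₀ + α)⁻¹ • B) * g := by
    have h1 : (s₀ + α) • g - B * g = 1 := by
      rw [← hmul, Matrix.sub_mul, Matrix.smul_mul, Matrix.one_mul]
    have h2 : (s₀ + α) • g = 1 + B * g := by rw [← h1]; abel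
    have h3 : g = (s₀ + α)⁻¹ • ((s₀ + α) • g) := by
      rw [smul_smul, inv_mul_cancel₀ (ne_of_gt hsum), one_smul]
    conv_lhs => rw [h3, h2]
    rw [smul_add, Matrix.smul_mul]
  refine nonneg_of_fixpoint ?_ ?_ ?_ hfix
  · intro i j
    rcases eq_or_ne i j with rfl | hij
    · simp [Matrix.smul_apply, Matrix.one_apply]; positivity
    · simp [Matrix.smul_apply, Matrix.one_apply, hij]
  · intro i j
    simp only [Matrix.smul_apply, smul_eq_mul]
    exact mul_nonneg (le_of_lt (inv_pos.mpr hsum)) (hBnn i j)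
  · rw [mnorm_smul]
    rw [abs_of_pos (inv_pos.mpr hsum)]
    rw [inv_mul_lt_iff₀ hsum, mul_one]
    have := mnorm_nonneg B
    simp [hs₀]; linarith
lemma exists_res_bound (h : IsHurwitz M) (s₀ : ℝ) (hs₀ : 0 ≤ s₀) :
    ∃ C : ℝ, 0 < C ∧ ∀ s ∈ Set.Icc (0:ℝ) s₀,
      mnorm ((s • (1 : Matrix (Fin n) (Fin n) ℝ) - M)⁻¹) ≤ C := by
  have hA : Continuous fun s : ℝ => s • (1 : Matrix (Fin n) (Fin n) ℝ) - M :=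
    (continuous_id.smul continuous_const).sub continuous_const
  have hdet : Continuous fun s : ℝ => (s • (1 : Matrix (Fin n) (Fin n) ℝ) - M).det :=
    hA.matrix_det
  have hadj : Continuous fun s : ℝ => (s • (1 : Matrix (Fin n) (Fin n) ℝ) - M).adjugate :=
    hA.matrix_adjugate
  have hdetne : ∀ s ∈ Set.Icc (0:ℝ) s₀,
      (s • (1 : Matrix (Fin n) (Fin n) ℝ) - M).det ≠ 0 := fun s hs =>
    isUnit_iff_ne_zero.mp (isUnit_det_res h hs.1)
  have hcont : ContinuousOn
      (fun s : ℝ => mnorm ((s • (1 : Matrix (Fin n) (Fin n) ℝ) - M)⁻¹))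
      (Set.Icc 0 s₀) := by
    have hinv : ∀ s : ℝ, (s • (1 : Matrix (Fin n) (Fin n) ℝ) - M)⁻¹
        = ((s • (1 : Matrix (Fin n) (Fin n) ℝ) - M).det)⁻¹
          • (s • (1 : Matrix (Fin n) (Fin n) ℝ) - M).adjugate := by
      intro s; rw [Matrix.inv_def, Ring.inverse_eq_inv']
    simp_rw [hinv, mnorm, Matrix.smul_apply, smul_eq_mul]
    refine continuousOn_finset_sum _ fun i _ => continuousOn_finset_sum _ fun j _ => ?_
    refine continuous_abs.comp_continuousOn ?_
    have h1 : ContinuousOn (fun s : ℝ =>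
        ((s • (1 : Matrix (Fin n) (Fin n) ℝ) - M).det)⁻¹) (Set.Icc 0 s₀) :=
      ContinuousOn.inv₀ hdet.continuousOn hdetne
    have h2 : Continuous (fun s : ℝ =>
        (s • (1 : Matrix (Fin n) (Fin n) ℝ) - M).adjugate i j) := hadj.matrix_elem i j
    exact (h1.mul h2.continuousOn)
  have hne : (Set.Icc (0:ℝ) s₀).Nonempty := ⟨0, by constructor <;> [rfl; exact hs₀]⟩
  obtain ⟨x, hx, hmax⟩ := isCompact_Icc.exists_isMaxOn hne hcont
  refine ⟨mnorm ((x • (1 : Matrix (Fin n) (Fin n) ℝ) - M)⁻¹) + 1, ?_, ?_⟩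
  · have := mnorm_nonneg ((x • (1 : Matrix (Fin n) (Fin n) ℝ) - M)⁻¹); linarith
  · intro s hs
    have := hmax hs
    simp only [Set.mem_setOf_eq] at this
    linarith [this]

lemma res_nonneg_all (hm : ∀ i j, i ≠ j → 0 ≤ M i j) (h : IsHurwitz M) :
    ∀ i j, 0 ≤ (((0:ℝ) • (1 : Matrix (Fin n) (Fin n) ℝ) - M)⁻¹) i j := by
  obtain ⟨s₀, hs₀, hbase⟩ := base_nonneg hm h
  obtain ⟨C, hC, hbound⟩ := exists_res_bound h s₀ hs₀
  obtain ⟨N, hN⟩ := exists_nat_gt (2 * s₀ * C)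
  have hNpos : 0 < (N:ℝ) := lt_of_le_of_lt (by positivity) hN
  set δ := s₀ / N with hδ
  have hδnn : 0 ≤ δ := div_nonneg hs₀ (le_of_lt hNpos)
  have hδC : δ * C ≤ 1 / 2 := by
    rw [hδ, div_mul_eq_mul_div, div_le_div_iff₀ hNpos (by norm_num)]
    nlinarith
  have main : ∀ k : ℕ, k ≤ N →
      ∀ i j, 0 ≤ ((s₀ - k * δ) • (1 : Matrix (Fin n) (Fin n) ℝ) - M)⁻¹ i j := by
    intro k
    induction k with
    | zero => intro _ i j; simpa using hbase i j
    | succ k ih =>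
      intro hkN i j
      have hk : k ≤ N := le_of_lt (Nat.lt_of_succ_le hkN)
      have iht := ih hk
      set t := s₀ - k * δ with ht'
      set s := s₀ - (k+1 : ℕ) * δ with hs'
      have hkδ : ((k:ℝ)+1) * δ ≤ s₀ := by
        have h1 : ((k:ℝ)+1) ≤ N := by exact_mod_cast hkN
        have h2 : ((k:ℝ)+1) * δ ≤ N * δ := mul_le_mul_of_nonneg_right h1 hδnn
        have h3 : (N:ℝ) * δ = s₀ := by
          rw [hδ]; field_simp
        linarith
      have hsnn : 0 ≤ s := by
        rw [hs']; push_cast; linarith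
      have htnn : 0 ≤ t := by
        rw [ht']
        have : (k:ℝ) * δ ≤ ((k:ℝ)+1) * δ := by nlinarith
        linarith
      have hts : t - s = δ := by rw [ht', hs']; push_cast; ring
      have htmem : t ∈ Set.Icc (0:ℝ) s₀ := by
        constructor
        · exact htnn
        · rw [ht']; nlinarith [mul_nonneg (Nat.cast_nonneg k : (0:ℝ) ≤ k) hδnn]
      set gt := (t • (1 : Matrix (Fin n) (Fin n) ℝ) - M)⁻¹ with hgt
      set gs := (s • (1 : Matrix (Fin n) (Fin n) ℝ) - M)⁻¹ with hgs
      have hfix : gs = gt + ((t - s) • gt) * gs := resolvent_id h hsnn htnn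
      refine nonneg_of_fixpoint (X := gs) (Z := gt) (Y := (t - s) • gt) iht ?_ ?_ hfix i j
      · intro a b
        simp only [Matrix.smul_apply, smul_eq_mul]
        exact mul_nonneg (by rw [hts]; exact hδnn) (iht a b)
      · rw [mnorm_smul, hts, abs_of_nonneg hδnn]
        have h1 : mnorm gt ≤ C := hbound t htmem
        have h2 : δ * mnorm gt ≤ δ * C := mul_le_mul_of_nonneg_left h1 hδnn
        linarith
  have := main N (le_refl N)
  have hfin : s₀ - (N:ℝ) * δ = 0 := by rw [hδ]; field_simp; ring
  rw [hfin] at this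
  exact this

/-- Key vector lemma: a Metzler Hurwitz matrix admits a positive vector `d` with `M d < 0`. -/
lemma exists_pos_mulVec_neg (hm : ∀ i j, i ≠ j → 0 ≤ M i j) (h : IsHurwitz M) :
    ∃ d : Fin n → ℝ, (∀ i, 0 < d i) ∧ ∀ i, (M *ᵥ d) i < 0 := by
  have h0 : ((0:ℝ) • (1 : Matrix (Fin n) (Fin n) ℝ) - M) = -M := by
    rw [zero_smul, zero_sub]
  have hG : ∀ i j, 0 ≤ (-M)⁻¹ i j := by
    have := res_nonneg_all hm h
    rwa [h0] at this
  have hdet : IsUnit (-M).det := by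
    have := isUnit_det_res h (le_refl (0:ℝ))
    rwa [h0] at this
  have hGr : (-M)⁻¹ * (-M) = 1 := Matrix.nonsing_inv_mul _ hdet
  have hGl : (-M) * (-M)⁻¹ = 1 := Matrix.mul_nonsing_inv _ hdet
  set G := (-M)⁻¹ with hGdef
  refine ⟨fun i => ∑ j, G i j, ?_, ?_⟩
  · intro i
    have hrow : ∃ j, G i j ≠ 0 := by
      by_contra hrow
      push_neg at hrow
      have : (G * (-M)) i i = 0 := by
        rw [Matrix.mul_apply]
        exact Finset.sum_eq_zero fun k _ => by rw [hrow k, zero_mul]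
      rw [hGr] at this
      simp [Matrix.one_apply] at this
    obtain ⟨j₀, hj₀⟩ := hrow
    exact Finset.sum_pos' (fun j _ => hG i j)
      ⟨j₀, mem_univ j₀, lt_of_le_of_ne (hG i j₀) (Ne.symm hj₀)⟩
  · intro i
    have hMG : M * G = -1 := by
      have : -((-M) * G) = -1 := by rw [hGl]
      rw [← this, Matrix.neg_mul, neg_neg]
    have hd : (fun i => ∑ j, G i j) = G *ᵥ (fun _ => 1) := by
      funext i
      simp [Matrix.mulVec, dotProduct]
    rw [hd, Matrix.mulVec_mulVec, hMG]
    simp [Matrix.mulVec, dotProduct, Matrix.one_apply]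

lemma isHurwitz_transpose (h : IsHurwitz M) : IsHurwitz Mᵀ := by
  intro μ hμ
  apply h
  rw [spectrum.mem_iff] at hμ ⊢
  intro hunit
  apply hμ
  have htr : (Mᵀ).map (algebraMap ℝ ℂ) = (M.map (algebraMap ℝ ℂ))ᵀ := rfl
  rw [htr]
  have : algebraMap ℂ (Matrix (Fin n) (Fin n) ℂ) μ - (M.map (algebraMap ℝ ℂ))ᵀ
      = (algebraMap ℂ (Matrix (Fin n) (Fin n) ℂ) μ - M.map (algebraMap ℝ ℂ))ᵀ := by
    rw [Matrix.transpose_sub]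
    congr 1
    rw [Algebra.algebraMap_eq_smul_one, Matrix.transpose_smul, Matrix.transpose_one]
  rw [this, Matrix.isUnit_iff_isUnit_det, Matrix.det_transpose,
    ← Matrix.isUnit_iff_isUnit_det]
  exact hunit
end CHaux

theorem comparison_hurwitz_implies_diagonal_stable {n : ℕ} (A : Matrix (Fin n) (Fin n) ℝ)
    (h : IsHurwitz (compMat A)) :
    ∃ p : Fin n → ℝ, (∀ i, 0 < p i) ∧
      (-(Matrix.diagonal p * A + Aᵀ * Matrix.diagonal p)).PosDef := by
  set M := compMat A with hM
  have hm : ∀ i j, i ≠ j → 0 ≤ M i j := fun i j hij => by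
    simp [hM, compMat, hij]
  have hmT : ∀ i j, i ≠ j → 0 ≤ Mᵀ i j := fun i j hij => hm j i (Ne.symm hij)
  obtain ⟨d, hd, hMd⟩ := CHaux.exists_pos_mulVec_neg hm h
  obtain ⟨c, hc, hMc⟩ := CHaux.exists_pos_mulVec_neg hmT (CHaux.isHurwitz_transpose h)
  have hMii : ∀ i, M i i < 0 := by
    intro i
    by_contra hpos
    push_neg at hpos
    have h0 : 0 ≤ (M *ᵥ d) i := by
      rw [Matrix.mulVec, dotProduct]
      refine Finset.sum_nonneg fun j _ => ?_
      rcases eq_or_ne i j with h' | hij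
      · subst h'; exact mul_nonneg hpos (le_of_lt (hd i))
      · exact mul_nonneg (hm i j hij) (le_of_lt (hd j))
    linarith [hMd i]
  have hAii : ∀ i, A i i = M i i := by
    intro i
    have h1 : M i i = -max (-(A i i)) 0 := by simp [hM, compMat]
    have h2 := hMii i
    rw [h1] at h2
    have h3 : 0 < max (-(A i i)) 0 := by linarith
    have h4 : 0 < -(A i i) := by
      by_contra h5
      push_neg at h5
      rw [max_eq_right h5] at h3
      exact lt_irrefl 0 h3
    rw [h1, max_eq_left (le_of_lt h4), neg_neg]
  set p := fun i => c i / d i with hp'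
  have hp : ∀ i, 0 < p i := fun i => div_pos (hc i) (hd i)
  have hpd : ∀ i, p i * d i = c i := fun i => div_mul_cancel₀ (c i) (ne_of_gt (hd i))
  refine ⟨p, hp, ?_⟩
  set S := -(Matrix.diagonal p * A + Aᵀ * Matrix.diagonal p) with hS
  have hSapp : ∀ i j, S i j = -(p i * A i j + A j i * p j) := by
    intro i j
    rw [hS]
    simp [Matrix.add_apply, Matrix.neg_apply, Matrix.diagonal_mul, Matrix.mul_diagonal,
      Matrix.transpose_apply]
  have hSsymm : ∀ i j, S j i = S i j := by intro i j; rw [hSapp, hSapp]; ring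
  have hherm : S.IsHermitian := by
    rw [Matrix.IsHermitian]
    ext i j
    rw [Matrix.conjTranspose_apply, hSsymm i j]
    simp
  -- key strict diagonal dominance inequality for T i j = S i j * (d i * d j)
  have hkey : ∀ i, ∑ j ∈ Finset.univ.erase i, |S i j| * (d i * d j) < S i i * (d i * d i) := by
    intro i
    have hSii : S i i * (d i * d i) = -2 * (c i * (M i i * d i)) := by
      have h1 : S i i = -(2 * p i * M i i) := by rw [hSapp i i, hAii i]; ring
      rw [h1, ← hpd i]; ring
    have hoff : ∀ j ∈ Finset.univ.erase i, |S i j| * (d i * d j)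
        ≤ c i * (M i j * d j) + c j * (M j i * d i) := by
      intro j hj
      have hij : j ≠ i := Finset.ne_of_mem_erase hj
      have hij' : i ≠ j := Ne.symm hij
      have h1 : |S i j| ≤ p i * |A i j| + p j * |A j i| := by
        calc |S i j| = |p i * A i j + A j i * p j| := by rw [hSapp, abs_neg]
          _ ≤ |p i * A i j| + |A j i * p j| := abs_add_le _ _
          _ = p i * |A i j| + p j * |A j i| := by
              rw [abs_mul, abs_mul, abs_of_pos (hp i), abs_of_pos (hp j)]; ring
      have hMij : M i j = |A i j| := by simp [hM, compMat, hij']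
      have hMji : M j i = |A j i| := by simp [hM, compMat, hij]
      have hdd : 0 ≤ d i * d j := le_of_lt (mul_pos (hd i) (hd j))
      calc |S i j| * (d i * d j)
          ≤ (p i * |A i j| + p j * |A j i|) * (d i * d j) :=
            mul_le_mul_of_nonneg_right h1 hdd
        _ = (p i * d i) * (|A i j| * d j) + (p j * d j) * (|A j i| * d i) := by ring
        _ = c i * (M i j * d j) + c j * (M j i * d i) := by
            rw [hpd i, hpd j, hMij, hMji]
    have hMdsplit : (M *ᵥ d) i = M i i * d i + ∑ j ∈ Finset.univ.erase i, M i j * d j := by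
      rw [Matrix.mulVec, dotProduct,
        ← Finset.add_sum_erase Finset.univ (fun j => M i j * d j) (Finset.mem_univ i)]
    have hMcsplit : (Mᵀ *ᵥ c) i = M i i * c i + ∑ j ∈ Finset.univ.erase i, M j i * c j := by
      rw [Matrix.mulVec, dotProduct,
        ← Finset.add_sum_erase Finset.univ (fun j => Mᵀ i j * c j) (Finset.mem_univ i)]
      rfl
    have hsum : ∑ j ∈ Finset.univ.erase i, (c i * (M i j * d j) + c j * (M j i * d i))
        = c i * ((M *ᵥ d) i - M i i * d i) + d i * ((Mᵀ *ᵥ c) i - M i i * c i) := by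
      rw [Finset.sum_add_distrib]
      congr 1
      · rw [← Finset.mul_sum, hMdsplit]
        ring
      · rw [hMcsplit]
        rw [show ∑ j ∈ Finset.univ.erase i, c j * (M j i * d i)
            = d i * ∑ j ∈ Finset.univ.erase i, M j i * c j by
          rw [Finset.mul_sum]; exact Finset.sum_congr rfl fun j _ => by ring]
        ring
    calc ∑ j ∈ Finset.univ.erase i, |S i j| * (d i * d j)
        ≤ ∑ j ∈ Finset.univ.erase i, (c i * (M i j * d j) + c j * (M j i * d i)) :=
          Finset.sum_le_sum hoff
      _ = c i * ((M *ᵥ d) i - M i i * d i) + d i * ((Mᵀ *ᵥ c) i - M i i * c i) := hsum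
      _ < c i * (0 - M i i * d i) + d i * (0 - M i i * c i) := by
          refine add_lt_add ?_ ?_
          · exact mul_lt_mul_of_pos_left (sub_lt_sub_right (hMd i) _) (hc i)
          · exact mul_lt_mul_of_pos_left (sub_lt_sub_right (hMc i) _) (hd i)
      _ = -2 * (c i * (M i i * d i)) := by ring
      _ = S i i * (d i * d i) := hSii.symm
  refine Matrix.PosDef.of_dotProduct_mulVec_pos hherm ?_
  intro x hx
  have hstar : star x = x := by
    funext i; simp
  rw [hstar]
  set y := fun i => x i / d i with hy
  have hxy : ∀ i, x i = d i * y i := fun i => by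
    rw [hy, mul_comm, div_mul_cancel₀ (x i) (ne_of_gt (hd i))]
  have hquad : dotProduct x (S *ᵥ x)
      = ∑ i, ∑ j, (S i j * (d i * d j)) * (y i * y j) := by
    simp only [dotProduct, Matrix.mulVec, Finset.mul_sum]
    refine Finset.sum_congr rfl fun i _ => Finset.sum_congr rfl fun j _ => ?_
    rw [hxy i, hxy j]; ring
  set T := fun i j => S i j * (d i * d j) with hT
  have hTsymm : ∀ i j, T j i = T i j := fun i j => by
    simp only [hT]; rw [hSsymm]; ring
  have hTabs : ∀ i j, |T i j| = |S i j| * (d i * d j) := fun i j => by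
    simp only [hT]
    rw [abs_mul, abs_of_pos (mul_pos (hd i) (hd j))]
  -- lower bound each off-diagonal term
  have hlow : ∀ i, ∀ j ∈ Finset.univ.erase i,
      -(|T i j| * (y i ^ 2 + y j ^ 2) / 2) ≤ T i j * (y i * y j) := by
    intro i j _
    have h1 : -(|T i j * (y i * y j)|) ≤ T i j * (y i * y j) := neg_abs_le _
    have h3 : |y i * y j| ≤ (y i ^ 2 + y j ^ 2) / 2 := by
      rw [abs_mul]
      nlinarith [sq_nonneg (|y i| - |y j|), sq_abs (y i), sq_abs (y j),
        abs_nonneg (y i), abs_nonneg (y j)]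
    have h2 : |T i j * (y i * y j)| ≤ |T i j| * (y i ^ 2 + y j ^ 2) / 2 := by
      rw [abs_mul]
      calc |T i j| * |y i * y j| ≤ |T i j| * ((y i ^ 2 + y j ^ 2) / 2) :=
            mul_le_mul_of_nonneg_left h3 (abs_nonneg _)
        _ = |T i j| * (y i ^ 2 + y j ^ 2) / 2 := by ring
    linarith
  have hsplit : ∀ i, ∑ j, T i j * (y i * y j)
      = T i i * (y i * y i) + ∑ j ∈ Finset.univ.erase i, T i j * (y i * y j) := by
    intro i
    rw [← Finset.add_sum_erase Finset.univ (fun j => T i j * (y i * y j)) (Finset.mem_univ i)]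
  have hswap : ∑ i, ∑ j ∈ Finset.univ.erase i, |T i j| * y j ^ 2
      = ∑ i, ∑ j ∈ Finset.univ.erase i, |T i j| * y i ^ 2 := by
    rw [Finset.sum_comm' (s := Finset.univ) (t := fun i => Finset.univ.erase i)
      (t' := Finset.univ) (s' := fun j => Finset.univ.erase j)
      (by intro x y; simp [Finset.mem_erase]; tauto)]
    refine Finset.sum_congr rfl fun i _ => Finset.sum_congr rfl fun j _ => ?_
    rw [hTsymm]
  have hLB : ∑ i, (T i i * (y i * y i) - ∑ j ∈ Finset.univ.erase i, |T i j| * (y i ^ 2 + y j ^ 2) / 2)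
      = ∑ i, (T i i - ∑ j ∈ Finset.univ.erase i, |T i j|) * y i ^ 2 := by
    have hin : ∀ i, ∑ j ∈ Finset.univ.erase i, |T i j| * (y i ^ 2 + y j ^ 2) / 2
        = (∑ j ∈ Finset.univ.erase i, |T i j| * y i ^ 2) / 2
          + (∑ j ∈ Finset.univ.erase i, |T i j| * y j ^ 2) / 2 := by
      intro i
      rw [← Finset.sum_div, ← add_div, ← Finset.sum_add_distrib]
      congr 1
      exact Finset.sum_congr rfl fun j _ => by ring
    rw [Finset.sum_sub_distrib]
    have hR : ∑ i, (T i i - ∑ j ∈ Finset.univ.erase i, |T i j|) * y i ^ 2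
        = ∑ i, T i i * (y i * y i) - ∑ i, (∑ j ∈ Finset.univ.erase i, |T i j|) * y i ^ 2 := by
      rw [← Finset.sum_sub_distrib]
      exact Finset.sum_congr rfl fun i _ => by ring
    rw [hR]
    congr 1
    simp_rw [hin]
    rw [Finset.sum_add_distrib, ← Finset.sum_div, ← Finset.sum_div, hswap, add_halves]
    exact Finset.sum_congr rfl fun i _ => by rw [Finset.sum_mul]
  have hWpos : ∀ i, 0 < T i i - ∑ j ∈ Finset.univ.erase i, |T i j| := by
    intro i
    have h1 := hkey i
    have h2 : ∑ j ∈ Finset.univ.erase i, |T i j| = ∑ j ∈ Finset.univ.erase i, |S i j| * (d i * d j) :=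
      Finset.sum_congr rfl fun j _ => hTabs i j
    have h3 : T i i = S i i * (d i * d i) := rfl
    rw [h2, h3]
    linarith
  have hy0 : ∃ i, y i ≠ 0 := by
    obtain ⟨i, hi⟩ := Function.ne_iff.mp hx
    exact ⟨i, div_ne_zero hi (ne_of_gt (hd i))⟩
  obtain ⟨i₀, hi₀⟩ := hy0
  have hfinal : 0 < ∑ i, (T i i - ∑ j ∈ Finset.univ.erase i, |T i j|) * y i ^ 2 := by
    refine Finset.sum_pos' (fun i _ => mul_nonneg (le_of_lt (hWpos i)) (sq_nonneg _)) ?_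
    refine ⟨i₀, Finset.mem_univ i₀, mul_pos (hWpos i₀) ?_⟩
    exact lt_of_le_of_ne (sq_nonneg _) (Ne.symm (pow_ne_zero 2 hi₀))
  rw [hquad]
  have hge : ∑ i, (T i i * (y i * y i) - ∑ j ∈ Finset.univ.erase i, |T i j| * (y i ^ 2 + y j ^ 2) / 2)
      ≤ ∑ i, ∑ j, T i j * (y i * y j) := by
    refine Finset.sum_le_sum fun i _ => ?_
    rw [hsplit i]
    have hle := Finset.sum_le_sum fun j hj => hlow i j hj
    calc T i i * (y i * y i) - ∑ j ∈ Finset.univ.erase i, |T i j| * (y i ^ 2 + y j ^ 2) / 2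
        = T i i * (y i * y i)
          + ∑ j ∈ Finset.univ.erase i, -(|T i j| * (y i ^ 2 + y j ^ 2) / 2) := by
          rw [Finset.sum_neg_distrib]; ring
      _ ≤ T i i * (y i * y i) + ∑ j ∈ Finset.univ.erase i, T i j * (y i * y j) :=
          add_le_add_right hle _
  calc (0:ℝ) < ∑ i, (T i i - ∑ j ∈ Finset.univ.erase i, |T i j|) * y i ^ 2 := hfinal
    _ = ∑ i, (T i i * (y i * y i) - ∑ j ∈ Finset.univ.erase i, |T i j| * (y i ^ 2 + y j ^ 2) / 2) := hLB.symm
    _ ≤ ∑ i, ∑ j, T i j * (y i * y j) := hge
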